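/- If I is a weakly semiprimary ideal of R with I contained in the nilradical of R, and J is any ideal with J ⊆ I, then J is a weakly semiprimary ideal of R. In particular, LI, L ∩ I, and Iⁿ (n ≥ 1) are weakly semiprimary for any ideal L. -/

import Mathlib

variable {R : Type*}

/-- δ is an expansion function of ideals: L ⊆ δ(L) always, and J ⊆ I implies δ(J) ⊆ δ(I). -/
def IsExpansionFunction [CommRing R] (δ : Ideal R → Ideal R) : Prop :=
  (∀ L : Ideal R, L ≤ δ L) ∧ ∀ I J : Ideal R, J ≤ I → δ J ≤ δ I

/-- I is a weakly δ-semiprimary ideal: I is proper and 0 ≠ ab ∈ I implies a ∈ δ(I) or b ∈ δ(I). -/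
def IsWeaklyDeltaSemiprimary [CommRing R] (δ : Ideal R → Ideal R) (I : Ideal R) : Prop :=
  I ≠ ⊤ ∧ ∀ a b : R, a * b ≠ 0 → a * b ∈ I → a ∈ δ I ∨ b ∈ δ I

/-- I is a δ-semiprimary ideal: I is proper and ab ∈ I implies a ∈ δ(I) or b ∈ δ(I). -/
def IsDeltaSemiprimary [CommRing R] (δ : Ideal R → Ideal R) (I : Ideal R) : Prop :=
  I ≠ ⊤ ∧ ∀ a b : R, a * b ∈ I → a ∈ δ I ∨ b ∈ δ I

/-- I is weakly semiprimary: I is proper and 0 ≠ ab ∈ I implies a ∈ √I or b ∈ √I. -/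
def IsWeaklySemiprimary [CommRing R] (I : Ideal R) : Prop :=
  I ≠ ⊤ ∧ ∀ a b : R, a * b ≠ 0 → a * b ∈ I → a ∈ I.radical ∨ b ∈ I.radical

/-- I is semiprimary: I is proper and ab ∈ I implies a ∈ √I or b ∈ √I. -/
def IsSemiprimary [CommRing R] (I : Ideal R) : Prop :=
  I ≠ ⊤ ∧ ∀ a b : R, a * b ∈ I → a ∈ I.radical ∨ b ∈ I.radical

/-- P is weakly prime: P is proper and 0 ≠ ab ∈ P implies a ∈ P or b ∈ P. -/
def IsWeaklyPrimeIdeal [CommRing R] (P : Ideal R) : Prop :=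
  P ≠ ⊤ ∧ ∀ a b : R, a * b ≠ 0 → a * b ∈ P → a ∈ P ∨ b ∈ P

theorem stmt_10 [CommRing R] [Nontrivial R] (I : Ideal R) (hI : IsWeaklySemiprimary I)
    (hnil : I ≤ nilradical R) :
    (∀ J : Ideal R, J ≤ I → IsWeaklySemiprimary J) ∧
    (∀ L : Ideal R, IsWeaklySemiprimary (L * I) ∧ IsWeaklySemiprimary (L ⊓ I)) ∧
    (∀ n : ℕ, 1 ≤ n → IsWeaklySemiprimary (I ^ n)) := by
  have key : ∀ J : Ideal R, J ≤ I → IsWeaklySemiprimary J := by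
    intro J hJI
    have hrad : ∀ K : Ideal R, K ≤ nilradical R → K.radical = nilradical R := by
      intro K hK
      apply le_antisymm
      · calc K.radical ≤ (nilradical R).radical := Ideal.radical_mono hK
          _ = nilradical R := by rw [nilradical, Ideal.radical_idem]
      · have : (⊥ : Ideal R).radical ≤ K.radical := Ideal.radical_mono bot_le
        simpa [nilradical] using this
    constructor
    · intro h
      exact hI.1 (top_le_iff.mp (h ▸ hJI))
    · intro a b hab habJ
      have := hI.2 a b hab (hJI habJ)
      rw [hrad J (le_trans hJI hnil), ← hrad I hnil]
      exact this
  refine ⟨key, fun L => ⟨key _ Ideal.mul_le_right, key _ inf_le_right⟩,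
    fun n hn => key _ (Ideal.pow_le_self (by omega))⟩
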